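/- Let G be a finite simple graph on n ≥ 2 vertices and let k ≥ 2 be an even integer. For an integer t ≥ 1, let X_t denote the number of inter-component edges of G with respect to a random t-out subgraph of G, and let Y_t denote the number of inter-component edges of G with respect to a random expected t-out subgraph of G. Set p = n·(e^(−k/3) + e^(−k/8)) and assume p < 1, and set D = (p/(1−p))·(n choose 2). Then E[X_{2k}] − D ≤ E[Y_k] ≤ E[X_{k/2}] + D. -/

import Mathlib

open Finset

variable {V : Type*}

/-- The set of legal choices of one vertex `v` in the random `k`-out model:
`v` picks a set of exactly `min k (deg v)` of its neighbours. -/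
abbrev kOutChoice [Fintype V] [DecidableEq V] (G : SimpleGraph V) [DecidableRel G.Adj]
    (k : ℕ) (v : V) :=
  {A : Finset V // A ⊆ G.neighborFinset v ∧ A.card = min k (G.degree v)}

/-- The sample space of the random `k`-out model: every vertex independently and
uniformly picks a legal choice; the uniform measure on this finite product space
is exactly the joint distribution of the vertices' independent uniform choices. -/
abbrev kOutSpace [Fintype V] [DecidableEq V] (G : SimpleGraph V) [DecidableRel G.Adj]
    (k : ℕ) :=
  ∀ v : V, kOutChoice G k v

/-- The random `k`-out subgraph determined by an outcome `ω`: an edge is present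
iff it was chosen by at least one of its endpoints. -/
def kOutGraph [Fintype V] [DecidableEq V] (G : SimpleGraph V) [DecidableRel G.Adj]
    (k : ℕ) (ω : kOutSpace G k) : SimpleGraph V :=
  SimpleGraph.fromRel (fun u v => v ∈ (ω u).1)

/-- The number of edges of `G` whose endpoints lie in different connected
components of `H` (the inter-component edges of `G` with respect to `H`). -/
noncomputable def interCompCount (G H : SimpleGraph V) : ℕ :=
  Set.ncard {e : Sym2 V | e ∈ G.edgeSet ∧ ∀ u v : V, e = s(u, v) → ¬ H.Reachable u v}

/-- The expected number of inter-component edges of `G` with respect to a random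
`k`-out subgraph of `G`: the average over the (uniform) finite sample space. -/
noncomputable def kOutExpect [Fintype V] [DecidableEq V] (G : SimpleGraph V)
    [DecidableRel G.Adj] (k : ℕ) : ℝ :=
  (∑ ω : kOutSpace G k, (interCompCount G (kOutGraph G k ω) : ℝ)) /
    (Fintype.card (kOutSpace G k) : ℝ)
/-- The directed edges of `G`: ordered pairs of adjacent vertices. -/
abbrev dirEdges (G : SimpleGraph V) := {p : V × V // G.Adj p.1 p.2}

/-- The sampling probability `min (1, k / deg u)` of a directed edge leaving `u`. -/
noncomputable def expKOutProb [Fintype V] (G : SimpleGraph V) [DecidableRel G.Adj]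
    (k : ℕ) (u : V) : ℝ :=
  min 1 ((k : ℝ) / (G.degree u : ℝ))

/-- The probability of the outcome `f` of the independent Bernoulli variables,
one for each directed edge of `G`. -/
noncomputable def expKOutWeight [Fintype V] (G : SimpleGraph V) [DecidableRel G.Adj]
    (k : ℕ) (f : dirEdges G → Bool) : ℝ :=
  ∏ e : dirEdges G, if f e then expKOutProb G k e.1.1 else 1 - expKOutProb G k e.1.1

/-- The random expected `k`-out subgraph determined by an outcome `f`: the edge
`{u,v}` is present iff it was sampled in at least one of its two directions. -/
def expKOutGraph (G : SimpleGraph V) (k : ℕ) (f : dirEdges G → Bool) : SimpleGraph V :=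
  SimpleGraph.fromRel (fun u v => ∃ h : G.Adj u v, f ⟨(u, v), h⟩)

/-- The expected number of inter-component edges of `G` with respect to a random
expected `k`-out subgraph of `G`. -/
noncomputable def expKOutExpect [Fintype V] [DecidableEq V] (G : SimpleGraph V)
    [DecidableRel G.Adj] (k : ℕ) : ℝ :=
  ∑ f : dirEdges G → Bool,
    expKOutWeight G k f * (interCompCount G (expKOutGraph G k f) : ℝ)

set_option linter.unusedSectionVars false
set_option maxHeartbeats 1000000

section Aux
variable [Fintype V] [DecidableEq V] (G : SimpleGraph V) [DecidableRel G.Adj]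

def famGraph (A : V → Finset V) : SimpleGraph V :=
  SimpleGraph.fromRel (fun u v => v ∈ A u)

noncomputable def Fcnt (A : V → Finset V) : ℝ :=
  (interCompCount G (famGraph A) : ℝ)

lemma Fcnt_nonneg (A : V → Finset V) : 0 ≤ Fcnt G A := Nat.cast_nonneg _

lemma interCompCount_le (H : SimpleGraph V) :
    (interCompCount G H : ℝ) ≤ ((Fintype.card V).choose 2 : ℝ) := by
  have h1 : {e : Sym2 V | e ∈ G.edgeSet ∧ ∀ u v : V, e = s(u, v) → ¬ H.Reachable u v}
      ⊆ G.edgeSet := fun e he => he.1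
  have h2 : Set.ncard {e : Sym2 V | e ∈ G.edgeSet ∧ ∀ u v : V, e = s(u, v) →
      ¬ H.Reachable u v} ≤ Set.ncard G.edgeSet :=
    Set.ncard_le_ncard h1 (Set.toFinite _)
  have h3 : Set.ncard G.edgeSet = G.edgeFinset.card := by
    rw [Set.ncard_eq_toFinset_card', SimpleGraph.edgeFinset]
  have h4 := SimpleGraph.card_edgeFinset_le_card_choose_two (G := G)
  exact_mod_cast le_trans h2 (h3 ▸ h4)

lemma Fcnt_le (A : V → Finset V) : Fcnt G A ≤ ((Fintype.card V).choose 2 : ℝ) :=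
  interCompCount_le G _

lemma Fcnt_anti {A B : V → Finset V} (h : ∀ u, A u ⊆ B u) : Fcnt G B ≤ Fcnt G A := by
  have hle : famGraph A ≤ famGraph B := by
    intro u v huv
    rw [famGraph, SimpleGraph.fromRel_adj] at huv ⊢
    exact ⟨huv.1, huv.2.imp (fun hm => h u hm) (fun hm => h v hm)⟩
  have hsub : {e : Sym2 V | e ∈ G.edgeSet ∧ ∀ u v : V, e = s(u, v) →
        ¬ (famGraph B).Reachable u v}
      ⊆ {e : Sym2 V | e ∈ G.edgeSet ∧ ∀ u v : V, e = s(u, v) →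
        ¬ (famGraph A).Reachable u v} := by
    intro e he
    exact ⟨he.1, fun u v hv hr => he.2 u v hv (hr.mono hle)⟩
  unfold Fcnt interCompCount
  exact_mod_cast Set.ncard_le_ncard hsub (Set.toFinite _)


/-- the family space of selections with prescribed sizes -/
def PS (s : V → ℕ) : Finset (V → Finset V) :=
  Fintype.piFinset (fun u => (G.neighborFinset u).powersetCard (s u))

/-- the selection family determined by the Bernoulli outcome `f` -/
def Sel (f : dirEdges G → Bool) : V → Finset V :=
  fun u => (G.neighborFinset u).filter
    (fun v => (if h : G.Adj u v then f ⟨(u, v), h⟩ else false) = true)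

lemma expKOutGraph_eq (k : ℕ) (f : dirEdges G → Bool) :
    expKOutGraph G k f = famGraph (Sel G f) := by
  ext u v
  simp only [expKOutGraph, famGraph, SimpleGraph.fromRel_adj, Sel, mem_filter,
    SimpleGraph.mem_neighborFinset]
  constructor
  · rintro ⟨hne, h⟩
    refine ⟨hne, ?_⟩
    rcases h with ⟨h, hf⟩ | ⟨h, hf⟩
    · exact Or.inl ⟨h, by rw [dif_pos h]; exact hf⟩
    · exact Or.inr ⟨h, by rw [dif_pos h]; exact hf⟩
  · rintro ⟨hne, h⟩
    refine ⟨hne, ?_⟩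
    rcases h with ⟨h, hf⟩ | ⟨h, hf⟩
    · rw [dif_pos h] at hf; exact Or.inl ⟨h, hf⟩
    · rw [dif_pos h] at hf; exact Or.inr ⟨h, hf⟩

lemma kOutGraph_eq (k : ℕ) (ω : kOutSpace G k) :
    kOutGraph G k ω = famGraph (fun u => (ω u).1) := rfl

/-- `kOutExpect` as a normalized sum over the family space. -/
lemma kOutExpect_eq (t : ℕ) :
    kOutExpect G t = (∑ A ∈ PS G (fun u => min t (G.degree u)), Fcnt G A) /
      (∏ u, ((G.degree u).choose (min t (G.degree u)) : ℝ)) := by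
  have hsum : ∑ ω : kOutSpace G t, (interCompCount G (kOutGraph G t ω) : ℝ)
      = ∑ A ∈ PS G (fun u => min t (G.degree u)), Fcnt G A := by
    refine Finset.sum_bij' (fun ω _ => fun u => (ω u).1)
      (fun A hA => fun u => ⟨A u, ?_, ?_⟩) ?_ ?_ ?_ ?_ ?_
    · rw [PS, Fintype.mem_piFinset] at hA
      exact (mem_powersetCard.1 (hA u)).1
    · rw [PS, Fintype.mem_piFinset] at hA
      exact (mem_powersetCard.1 (hA u)).2
    · intro ω _
      rw [PS, Fintype.mem_piFinset]
      intro u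
      exact mem_powersetCard.2 ⟨(ω u).2.1, (ω u).2.2⟩
    · intro A hA; exact mem_univ _
    · intro ω _; funext u; exact Subtype.ext rfl
    · intro A hA; rfl
    · intro ω _; rw [kOutGraph_eq, Fcnt]
  have hcard : (Fintype.card (kOutSpace G t) : ℝ)
      = ∏ u, ((G.degree u).choose (min t (G.degree u)) : ℝ) := by
    rw [Fintype.card_pi]
    push_cast
    refine congrArg _ (funext fun u => ?_)
    norm_cast
    rw [Fintype.card_subtype]
    have : Finset.filter (fun A : Finset V => A ⊆ G.neighborFinset u
        ∧ A.card = min t (G.degree u)) univ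
        = (G.neighborFinset u).powersetCard (min t (G.degree u)) := by
      ext A
      simp [mem_powersetCard]
    rw [this, card_powersetCard, SimpleGraph.card_neighborFinset_eq_degree]
  rw [kOutExpect, hsum, hcard]


/-- splitting a product of ite over membership in a subset -/
lemma prod_ite_subset (s S : Finset V) (hS : S ⊆ s) (a b : ℝ) :
    (∏ v ∈ s, if v ∈ S then a else b) = a ^ S.card * b ^ (s.card - S.card) := by
  rw [← Finset.prod_filter_mul_prod_filter_not s (fun v => v ∈ S)]
  have h1 : s.filter (fun v => v ∈ S) = S := by
    ext v; simp only [mem_filter]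
    exact ⟨fun h => h.2, fun h => ⟨hS h, h⟩⟩
  have h2 : s.filter (fun v => v ∉ S) = s \ S := by
    ext v; simp [mem_sdiff]
  rw [h1, h2]
  have e1 : (∏ x ∈ S, if x ∈ S then a else b) = a ^ S.card := by
    rw [Finset.prod_congr rfl (fun x hx => if_pos hx), prod_const]
  have e2 : (∏ x ∈ s \ S, if x ∈ S then a else b) = b ^ (s.card - S.card) := by
    rw [Finset.prod_congr rfl (fun x hx => if_neg (mem_sdiff.1 hx).2), prod_const,
      card_sdiff_of_subset hS]
  rw [e1, e2]

lemma expKOutWeight_eq (t : ℕ) (f : dirEdges G → Bool) :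
    expKOutWeight G t f = ∏ u, (expKOutProb G t u) ^ (Sel G f u).card *
      (1 - expKOutProb G t u) ^ (G.degree u - (Sel G f u).card) := by
  classical
  set q := expKOutProb G t with hq
  set g : V → V → ℝ := fun u v =>
    if h : G.Adj u v then (if f ⟨(u, v), h⟩ then q u else 1 - q u) else 1 with hg
  have key : expKOutWeight G t f
      = ∏ p ∈ (univ : Finset (V × V)).filter (fun p => G.Adj p.1 p.2), g p.1 p.2 := by
    rw [expKOutWeight]
    rw [Finset.prod_subtype ((univ : Finset (V × V)).filter (fun p => G.Adj p.1 p.2))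
      (p := fun p => G.Adj p.1 p.2) (by intro p; simp)]
    refine Finset.prod_congr rfl fun e _ => ?_
    show _ = g e.1.1 e.1.2
    rw [hg]
    simp only []
    rw [dif_pos e.2]
  rw [key]
  rw [Finset.prod_finset_product' _ univ (fun u => G.neighborFinset u)
    (by intro p; simp [SimpleGraph.mem_neighborFinset])]
  refine Finset.prod_congr rfl fun u _ => ?_
  have step : ∀ v ∈ G.neighborFinset u,
      g u v = (if v ∈ Sel G f u then q u else 1 - q u) := by
    intro v hv
    have hadj : G.Adj u v := (SimpleGraph.mem_neighborFinset _ _ _).1 hv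
    rw [hg]
    simp only []
    rw [dif_pos hadj]
    have : v ∈ Sel G f u ↔ f ⟨(u, v), hadj⟩ = true := by
      rw [Sel, mem_filter, dif_pos hadj]
      exact ⟨fun h => h.2, fun h => ⟨hv, h⟩⟩
    by_cases hf : f ⟨(u, v), hadj⟩ = true
    · rw [if_pos hf, if_pos (this.2 hf)]
    · rw [if_neg hf, if_neg (fun hm => hf (this.1 hm))]
  rw [Finset.prod_congr rfl step,
    prod_ite_subset (G.neighborFinset u) (Sel G f u)
      (fun v hv => (mem_filter.1 hv).1) _ _,
    SimpleGraph.card_neighborFinset_eq_degree]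

/-- the Bernoulli expectation as a sum over the full family space -/
lemma expKOutExpect_eq (t : ℕ) :
    expKOutExpect G t = ∑ A ∈ Fintype.piFinset (fun u => (G.neighborFinset u).powerset),
      (∏ u, (expKOutProb G t u) ^ (A u).card *
        (1 - expKOutProb G t u) ^ (G.degree u - (A u).card)) * Fcnt G A := by
  rw [expKOutExpect]
  refine Finset.sum_bij' (fun f _ => Sel G f)
    (fun A _ => fun e => decide (e.1.2 ∈ A e.1.1)) ?_ (fun _ _ => mem_univ _) ?_ ?_ ?_
  · intro f _
    rw [Fintype.mem_piFinset]
    intro u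
    rw [mem_powerset]
    exact filter_subset _ _
  · -- left inverse : recover f
    intro f _
    funext e
    obtain ⟨⟨u, v⟩, h⟩ := e
    simp only [Sel, mem_filter, dif_pos h, SimpleGraph.mem_neighborFinset]
    cases hb : f ⟨(u, v), h⟩ <;> simp [h, hb]
  · -- right inverse : recover A
    intro A hA
    rw [Fintype.mem_piFinset] at hA
    funext u
    ext v
    simp only [Sel, mem_filter, SimpleGraph.mem_neighborFinset]
    constructor
    · rintro ⟨hadj, hf⟩
      rw [dif_pos hadj] at hf
      exact of_decide_eq_true hf
    · intro hv
      have hadj : G.Adj u v := (SimpleGraph.mem_neighborFinset _ _ _).1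
        ((mem_powerset.1 (hA u)) hv)
      exact ⟨hadj, by rw [dif_pos hadj]; exact decide_eq_true hv⟩
  · intro f _
    rw [expKOutWeight_eq, expKOutGraph_eq, Fcnt]

/-- counting supersets of a fixed set with fixed cardinality -/
lemma card_filter_superset {α : Type*} [DecidableEq α] (t B : Finset α) (hB : B ⊆ t)
    (m : ℕ) (hBm : B.card ≤ m) :
    ((t.powersetCard m).filter (fun A => B ⊆ A)).card
      = (t.card - B.card).choose (m - B.card) := by
  classical
  rw [← Finset.card_sdiff_of_subset hB, ← card_powersetCard (m - B.card) (t \ B)]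
  refine Finset.card_bij' (fun A _ => A \ B) (fun C _ => C ∪ B) ?_ ?_ ?_ ?_
  · intro A hA
    rw [mem_filter, mem_powersetCard] at hA
    rw [mem_powersetCard]
    exact ⟨sdiff_subset_sdiff hA.1.1 le_rfl, by rw [card_sdiff_of_subset hA.2, hA.1.2]⟩
  · intro C hC
    rw [mem_powersetCard] at hC
    have hCB : Disjoint C B := disjoint_of_subset_left hC.1 (sdiff_disjoint)
    have hCt : C ⊆ t := hC.1.trans (sdiff_subset)
    rw [mem_filter, mem_powersetCard]
    refine ⟨⟨union_subset hCt hB, ?_⟩, subset_union_right⟩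
    rw [card_union_of_disjoint hCB, hC.2, Nat.sub_add_cancel hBm]
  · intro A hA
    rw [mem_filter] at hA
    exact sdiff_union_of_subset hA.2
  · intro C hC
    rw [mem_powersetCard] at hC
    have hCB : Disjoint C B := disjoint_of_subset_left hC.1 (sdiff_disjoint)
    exact union_sdiff_cancel_right hCB

lemma count_sub (s s' : V → ℕ) (h2 : ∀ u, s' u ≤ G.degree u)
    (A : V → Finset V) (hA : A ∈ PS G s') :
    ((PS G s).filter (fun B => ∀ u, B u ⊆ A u)).card
      = ∏ u, (s' u).choose (s u) := by
  rw [PS, Fintype.mem_piFinset] at hA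
  have hfe : (PS G s).filter (fun B => ∀ u, B u ⊆ A u)
      = Fintype.piFinset (fun u => (A u).powersetCard (s u)) := by
    ext B
    simp only [mem_filter, PS, Fintype.mem_piFinset, mem_powersetCard]
    constructor
    · rintro ⟨h1', h2'⟩
      exact fun u => ⟨h2' u, (h1' u).2⟩
    · intro h
      refine ⟨fun u => ⟨(h u).1.trans (mem_powersetCard.1 (hA u)).1, (h u).2⟩,
        fun u => (h u).1⟩
  rw [hfe, Fintype.card_piFinset]
  refine Finset.prod_congr rfl fun u _ => ?_
  rw [card_powersetCard, (mem_powersetCard.1 (hA u)).2]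

lemma count_super (s s' : V → ℕ) (h1 : ∀ u, s u ≤ s' u)
    (B : V → Finset V) (hB : B ∈ PS G s) :
    ((PS G s').filter (fun A => ∀ u, B u ⊆ A u)).card
      = ∏ u, (G.degree u - s u).choose (s' u - s u) := by
  rw [PS, Fintype.mem_piFinset] at hB
  have hfe : (PS G s').filter (fun A => ∀ u, B u ⊆ A u)
      = Fintype.piFinset (fun u =>
          ((G.neighborFinset u).powersetCard (s' u)).filter (fun A' => B u ⊆ A')) := by
    ext A
    simp only [mem_filter, PS, Fintype.mem_piFinset]
    exact ⟨fun h u => ⟨h.1 u, h.2 u⟩, fun h => ⟨fun u => (h u).1, fun u => (h u).2⟩⟩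
  rw [hfe, Fintype.card_piFinset]
  refine Finset.prod_congr rfl fun u _ => ?_
  obtain ⟨hBsub, hBcard⟩ := mem_powersetCard.1 (hB u)
  rw [card_filter_superset _ _ hBsub _ (by rw [hBcard]; exact h1 u), hBcard,
    SimpleGraph.card_neighborFinset_eq_degree]

/-- The key averaging inequality : larger selections give fewer inter-component
edges on average. -/
lemma avg_anti (s s' : V → ℕ) (h1 : ∀ u, s u ≤ s' u) (h2 : ∀ u, s' u ≤ G.degree u) :
    (∑ A ∈ PS G s', Fcnt G A) / ∏ u, ((G.degree u).choose (s' u) : ℝ)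
      ≤ (∑ B ∈ PS G s, Fcnt G B) / ∏ u, ((G.degree u).choose (s u) : ℝ) := by
  classical
  have key : (∏ u, ((s' u).choose (s u) : ℝ)) * ∑ A ∈ PS G s', Fcnt G A
      ≤ (∏ u, ((G.degree u - s u).choose (s' u - s u) : ℝ)) * ∑ B ∈ PS G s, Fcnt G B := by
    have S1 : ∑ A ∈ PS G s', ∑ B ∈ PS G s,
          (if ∀ u, B u ⊆ A u then Fcnt G A else 0)
        = (∏ u, ((s' u).choose (s u) : ℝ)) * ∑ A ∈ PS G s', Fcnt G A := by
      rw [Finset.mul_sum]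
      refine Finset.sum_congr rfl fun A hA => ?_
      rw [← Finset.sum_filter, Finset.sum_const, count_sub G s s' h2 A hA]
      push_cast
      rw [nsmul_eq_mul]
      push_cast
      ring
    have S2 : ∑ A ∈ PS G s', ∑ B ∈ PS G s,
          (if ∀ u, B u ⊆ A u then Fcnt G B else 0)
        = (∏ u, ((G.degree u - s u).choose (s' u - s u) : ℝ)) * ∑ B ∈ PS G s, Fcnt G B := by
      rw [Finset.sum_comm, Finset.mul_sum]
      refine Finset.sum_congr rfl fun B hB => ?_
      rw [← Finset.sum_filter, Finset.sum_const, count_super G s s' h1 B hB]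
      push_cast
      rw [nsmul_eq_mul]
      push_cast
      ring
    rw [← S1, ← S2]
    refine Finset.sum_le_sum fun A hA => Finset.sum_le_sum fun B hB => ?_
    by_cases h : ∀ u, B u ⊆ A u
    · rw [if_pos h, if_pos h]
      exact Fcnt_anti G h
    · rw [if_neg h, if_neg h]
  -- now divide
  have hpos : ∀ u, (0:ℝ) < ((G.degree u).choose (s' u) : ℝ) := fun u => by
    exact_mod_cast Nat.choose_pos (h2 u)
  have hpos' : ∀ u, (0:ℝ) < ((G.degree u).choose (s u) : ℝ) := fun u => by
    exact_mod_cast Nat.choose_pos ((h1 u).trans (h2 u))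
  have hProdPos : (0:ℝ) < ∏ u, ((G.degree u).choose (s' u) : ℝ) :=
    Finset.prod_pos fun u _ => hpos u
  have hProdPos' : (0:ℝ) < ∏ u, ((G.degree u).choose (s u) : ℝ) :=
    Finset.prod_pos fun u _ => hpos' u
  rw [div_le_div_iff₀ hProdPos hProdPos']
  have hid : (∏ u, ((G.degree u).choose (s' u) : ℝ)) * (∏ u, ((s' u).choose (s u) : ℝ))
      = (∏ u, ((G.degree u).choose (s u) : ℝ))
        * (∏ u, ((G.degree u - s u).choose (s' u - s u) : ℝ)) := by
    rw [← Finset.prod_mul_distrib, ← Finset.prod_mul_distrib]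
    refine Finset.prod_congr rfl fun u _ => ?_
    exact_mod_cast congrArg (Nat.cast (R := ℝ)) (Nat.choose_mul (n := G.degree u) (h1 u))
  have hCpos : (0:ℝ) < ∏ u, ((s' u).choose (s u) : ℝ) :=
    Finset.prod_pos fun u _ => by exact_mod_cast Nat.choose_pos (h1 u)
  have hmul := mul_le_mul_of_nonneg_left key (le_of_lt hProdPos')
  have hL : (∏ u, ((G.degree u).choose (s u) : ℝ)) *
      ((∏ u, ((s' u).choose (s u) : ℝ)) * ∑ A ∈ PS G s', Fcnt G A)
      = ((∑ A ∈ PS G s', Fcnt G A) * (∏ u, ((G.degree u).choose (s u) : ℝ)))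
        * (∏ u, ((s' u).choose (s u) : ℝ)) := by ring
  have hR : (∏ u, ((G.degree u).choose (s u) : ℝ)) *
      ((∏ u, ((G.degree u - s u).choose (s' u - s u) : ℝ)) * ∑ B ∈ PS G s, Fcnt G B)
      = ((∑ B ∈ PS G s, Fcnt G B) * (∏ u, ((G.degree u).choose (s' u) : ℝ)))
        * (∏ u, ((s' u).choose (s u) : ℝ)) := by
    calc (∏ u, ((G.degree u).choose (s u) : ℝ)) *
        ((∏ u, ((G.degree u - s u).choose (s' u - s u) : ℝ)) * ∑ B ∈ PS G s, Fcnt G B)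
        = ((∏ u, ((G.degree u).choose (s u) : ℝ))
            * (∏ u, ((G.degree u - s u).choose (s' u - s u) : ℝ)))
          * ∑ B ∈ PS G s, Fcnt G B := by ring
      _ = ((∏ u, ((G.degree u).choose (s' u) : ℝ)) * (∏ u, ((s' u).choose (s u) : ℝ)))
          * ∑ B ∈ PS G s, Fcnt G B := by rw [hid]
      _ = _ := by ring
  rw [hL, hR] at hmul
  exact le_of_mul_le_mul_right hmul hCpos

/-- the per-vertex binomial weight -/
noncomputable def bwt (t : ℕ) (u : V) (j : ℕ) : ℝ :=
  (expKOutProb G t u) ^ j * (1 - expKOutProb G t u) ^ (G.degree u - j) *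
    ((G.degree u).choose j : ℝ)

lemma q_nonneg (t : ℕ) (u : V) : 0 ≤ expKOutProb G t u :=
  le_min zero_le_one (by positivity)

lemma q_le_one (t : ℕ) (u : V) : expKOutProb G t u ≤ 1 := min_le_left _ _

lemma bwt_nonneg (t : ℕ) (u : V) (j : ℕ) : 0 ≤ bwt G t u j := by
  have h1 := q_nonneg G t u
  have h2 : 0 ≤ 1 - expKOutProb G t u := by have := q_le_one G t u; linarith
  rw [bwt]
  positivity

lemma binom_one (t : ℕ) (u : V) :
    ∑ j ∈ range (G.degree u + 1), bwt G t u j = 1 := by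
  have := add_pow (expKOutProb G t u) (1 - expKOutProb G t u) (G.degree u)
  rw [add_sub_cancel, one_pow] at this
  simp only [bwt]
  exact this.symm

/-- the size distribution space -/
def SizeSpace : Finset (V → ℕ) := Fintype.piFinset (fun u => range (G.degree u + 1))

noncomputable def Wt (t : ℕ) (s : V → ℕ) : ℝ :=
  ∏ u, (expKOutProb G t u) ^ (s u) * (1 - expKOutProb G t u) ^ (G.degree u - s u)

lemma Wt_nonneg (t : ℕ) (s : V → ℕ) : 0 ≤ Wt G t s := by
  refine Finset.prod_nonneg fun u _ => ?_
  have h1 := q_nonneg G t u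
  have h2 : 0 ≤ 1 - expKOutProb G t u := by have := q_le_one G t u; linarith
  positivity

lemma Wt_mul_choose (t : ℕ) (s : V → ℕ) :
    Wt G t s * ∏ u, ((G.degree u).choose (s u) : ℝ) = ∏ u, bwt G t u (s u) := by
  rw [Wt, ← Finset.prod_mul_distrib]
  rfl

/-- decomposition of the Bernoulli expectation over size vectors -/
lemma expKOut_decomp (t : ℕ) :
    expKOutExpect G t = ∑ s ∈ SizeSpace G, Wt G t s * ∑ A ∈ PS G s, Fcnt G A := by
  classical
  rw [expKOutExpect_eq]
  rw [← Finset.sum_fiberwise_of_maps_to (g := fun A : V → Finset V => fun u => (A u).card)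
    (t := SizeSpace G) ?_ _]
  · refine Finset.sum_congr rfl fun s hs => ?_
    have hfil : (Fintype.piFinset (fun u => (G.neighborFinset u).powerset)).filter
        (fun A => (fun u => (A u).card) = s) = PS G s := by
      ext A
      simp only [mem_filter, Fintype.mem_piFinset, mem_powerset, PS, mem_powersetCard,
        funext_iff]
      exact ⟨fun h u => ⟨h.1 u, h.2 u⟩, fun h => ⟨fun u => (h u).1, fun u => (h u).2⟩⟩
    rw [hfil, Finset.mul_sum]
    refine Finset.sum_congr rfl fun A hA => ?_
    rw [PS, Fintype.mem_piFinset] at hA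
    have : ∀ u, (A u).card = s u := fun u => (mem_powersetCard.1 (hA u)).2
    rw [Wt]
    congr 1
    exact Finset.prod_congr rfl fun u _ => by rw [this u]
  · intro A hA
    rw [Fintype.mem_piFinset] at hA
    rw [SizeSpace, Fintype.mem_piFinset]
    intro u
    rw [mem_range, Nat.lt_succ_iff, ← SimpleGraph.card_neighborFinset_eq_degree]
    exact card_le_card (mem_powerset.1 (hA u))

lemma total_mass (t : ℕ) :
    ∑ s ∈ SizeSpace G, Wt G t s * ∏ u, ((G.degree u).choose (s u) : ℝ) = 1 := by
  classical
  have : ∀ s ∈ SizeSpace G, Wt G t s * ∏ u, ((G.degree u).choose (s u) : ℝ)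
      = ∏ u, bwt G t u (s u) := fun s _ => Wt_mul_choose G t s
  rw [Finset.sum_congr rfl this, SizeSpace, ← Finset.prod_univ_sum]
  rw [Finset.prod_congr rfl (fun u _ => binom_one G t u), Finset.prod_const_one]

/-- the union bound for bad size vectors -/
lemma union_bound (t : ℕ) (E : V → ℕ → Prop) [∀ u, DecidablePred (E u)] :
    ∑ s ∈ (SizeSpace G).filter (fun s => ∃ u, E u (s u)),
        Wt G t s * ∏ u, ((G.degree u).choose (s u) : ℝ)
      ≤ ∑ u, ∑ j ∈ (range (G.degree u + 1)).filter (E u), bwt G t u j := by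
  classical
  have hb : ∀ s ∈ (SizeSpace G).filter (fun s => ∃ u, E u (s u)),
      Wt G t s * ∏ u, ((G.degree u).choose (s u) : ℝ) = ∏ u, bwt G t u (s u) :=
    fun s _ => Wt_mul_choose G t s
  rw [Finset.sum_congr rfl hb]
  have step1 : ∑ s ∈ (SizeSpace G).filter (fun s => ∃ u, E u (s u)),
        ∏ u, bwt G t u (s u)
      ≤ ∑ u, ∑ s ∈ SizeSpace G,
          (if E u (s u) then (1:ℝ) else 0) * ∏ w, bwt G t w (s w) := by
    rw [Finset.sum_comm]
    rw [← Finset.sum_filter_add_sum_filter_not (SizeSpace G) (fun s => ∃ u, E u (s u))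
      (fun s => ∑ u, (if E u (s u) then (1:ℝ) else 0) * ∏ w, bwt G t w (s w))]
    have h2 : 0 ≤ ∑ s ∈ (SizeSpace G).filter (fun s => ¬ ∃ u, E u (s u)),
        ∑ u, (if E u (s u) then (1:ℝ) else 0) * ∏ w, bwt G t w (s w) := by
      refine Finset.sum_nonneg fun s _ => Finset.sum_nonneg fun u _ => ?_
      refine mul_nonneg (by positivity) (Finset.prod_nonneg fun w _ => bwt_nonneg G t w _)
    refine le_trans ?_ (le_add_of_nonneg_right h2)
    refine Finset.sum_le_sum fun s hs => ?_
    obtain ⟨u0, hu0⟩ := (Finset.mem_filter.1 hs).2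
    calc ∏ u, bwt G t u (s u)
        = (if E u0 (s u0) then (1:ℝ) else 0) * ∏ w, bwt G t w (s w) := by
          rw [if_pos hu0, one_mul]
      _ ≤ ∑ u, (if E u (s u) then (1:ℝ) else 0) * ∏ w, bwt G t w (s w) := by
          refine Finset.single_le_sum (f := fun u =>
            (if E u (s u) then (1:ℝ) else 0) * ∏ w, bwt G t w (s w)) ?_ (mem_univ u0)
          intro u _
          refine mul_nonneg (by positivity) (Finset.prod_nonneg fun w _ => bwt_nonneg G t w _)
  refine step1.trans (Finset.sum_le_sum fun u _ => le_of_eq ?_)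
  -- factorize the u-th summand
  set c : V → ℕ → ℝ := fun w j =>
    (if w = u then (if E u j then (1:ℝ) else 0) else 1) * bwt G t w j with hc
  have hprod : ∀ s : V → ℕ, (if E u (s u) then (1:ℝ) else 0) * ∏ w, bwt G t w (s w)
      = ∏ w, c w (s w) := by
    intro s
    rw [hc]
    simp only []
    rw [Finset.prod_mul_distrib]
    congr 1
    rw [Finset.prod_ite_eq' univ u (fun w => if E u (s w) then (1:ℝ) else 0),
      if_pos (mem_univ u)]
  rw [Finset.sum_congr rfl (fun s _ => hprod s), SizeSpace, ← Finset.prod_univ_sum]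
  rw [← Finset.mul_prod_erase univ _ (mem_univ u)]
  have hone : ∀ w ∈ univ.erase u, ∑ j ∈ range (G.degree w + 1), c w j = 1 := by
    intro w hw
    have hne : w ≠ u := (Finset.mem_erase.1 hw).1
    rw [hc]
    simp only [if_neg hne, one_mul]
    exact binom_one G t w
  rw [Finset.prod_congr rfl hone, Finset.prod_const_one, mul_one]
  rw [Finset.sum_filter]
  refine Finset.sum_congr rfl fun j _ => ?_
  rw [hc]
  by_cases hE : E u j <;> simp [hE]

lemma sum_twist (t : ℕ) (u : V) (a : ℝ) (ha : 0 ≤ a) (haq : 0 ≤ 1 - expKOutProb G t u +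
    a * expKOutProb G t u) :
    ∑ j ∈ range (G.degree u + 1), a ^ j * bwt G t u j
      = (1 - expKOutProb G t u + a * expKOutProb G t u) ^ (G.degree u) := by
  have := add_pow (a * expKOutProb G t u) (1 - expKOutProb G t u) (G.degree u)
  rw [add_comm] at this
  rw [this]
  refine Finset.sum_congr rfl fun j _ => ?_
  rw [bwt, mul_pow]
  ring

lemma degree_pos_q_eq (t : ℕ) (u : V) (h : t < G.degree u) :
    expKOutProb G t u = (t : ℝ) / (G.degree u : ℝ) := by
  have hd : (0:ℝ) < (G.degree u : ℝ) := by
    exact_mod_cast Nat.lt_of_le_of_lt (Nat.zero_le t) h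
  rw [expKOutProb, min_eq_right]
  rw [div_le_one hd]
  exact_mod_cast h.le

lemma q_mul_deg (t : ℕ) (u : V) (h : t < G.degree u) :
    expKOutProb G t u * (G.degree u : ℝ) = t := by
  have hd : ((G.degree u : ℝ)) ≠ 0 := by
    have : (0:ℝ) < (G.degree u : ℝ) := by
      exact_mod_cast Nat.lt_of_le_of_lt (Nat.zero_le t) h
    exact this.ne'
  rw [degree_pos_q_eq G t u h, div_mul_cancel₀ _ hd]

/-- Chernoff upper tail : probability the binomial exceeds `2k` -/
lemma tailHi (k : ℕ) (hk : 1 ≤ k) (u : V) :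
    ∑ j ∈ (range (G.degree u + 1)).filter (fun j => min (2 * k) (G.degree u) < j),
      bwt G k u j ≤ Real.exp (-(k : ℝ) / 3) := by
  classical
  by_cases hd : G.degree u ≤ 2 * k
  · have : (range (G.degree u + 1)).filter
        (fun j => min (2 * k) (G.degree u) < j) = ∅ := by
      refine Finset.filter_false_of_mem fun j hj => ?_
      rw [mem_range, Nat.lt_succ_iff] at hj
      rw [min_eq_right hd]
      omega
    rw [this, Finset.sum_empty]
    positivity
  · push_neg at hd
    have hkd : k < G.degree u := by omega
    set q := expKOutProb G k u with hq
    have hq0 := q_nonneg G k u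
    have hq1 := q_le_one G k u
    have hmin : min (2 * k) (G.degree u) = 2 * k := min_eq_left (by omega)
    have hterm : ∀ j ∈ (range (G.degree u + 1)).filter
          (fun j => min (2 * k) (G.degree u) < j),
        bwt G k u j ≤ ((4:ℝ) ^ k)⁻¹ * ((2:ℝ) ^ j * bwt G k u j) := by
      intro j hj
      have hjk : 2 * k < j := by rw [hmin] at hj; exact (mem_filter.1 hj).2
      have h4 : (4:ℝ) ^ k ≤ (2:ℝ) ^ j := by
        calc (4:ℝ) ^ k = (2:ℝ) ^ (2 * k) := by rw [pow_mul]; norm_num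
          _ ≤ (2:ℝ) ^ j := by
            exact pow_le_pow_right₀ one_le_two (by omega)
      have hb := bwt_nonneg G k u j
      rw [inv_mul_eq_div, le_div_iff₀ (by positivity)]
      calc bwt G k u j * 4 ^ k ≤ bwt G k u j * 2 ^ j := by
            exact mul_le_mul_of_nonneg_left h4 hb
        _ = 2 ^ j * bwt G k u j := by ring
    have step1 : ∑ j ∈ (range (G.degree u + 1)).filter
          (fun j => min (2 * k) (G.degree u) < j), bwt G k u j
        ≤ ((4:ℝ) ^ k)⁻¹ * ∑ j ∈ range (G.degree u + 1), (2:ℝ) ^ j * bwt G k u j := by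
      refine le_trans (Finset.sum_le_sum hterm) ?_
      rw [← Finset.mul_sum]
      refine mul_le_mul_of_nonneg_left ?_ (by positivity)
      refine Finset.sum_le_sum_of_subset_of_nonneg (filter_subset _ _) fun j _ _ => ?_
      exact mul_nonneg (by positivity) (bwt_nonneg G k u j)
    have hsum : ∑ j ∈ range (G.degree u + 1), (2:ℝ) ^ j * bwt G k u j
        = (1 + q) ^ (G.degree u) := by
      rw [sum_twist G k u 2 (by norm_num) (by nlinarith)]
      ring_nf
      rfl
    have hqd : q * (G.degree u : ℝ) = k := q_mul_deg G k u hkd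
    have hexp : (1 + q) ^ (G.degree u) ≤ Real.exp k := by
      calc (1 + q) ^ (G.degree u) ≤ (Real.exp q) ^ (G.degree u) := by
            refine pow_le_pow_left₀ (by linarith) ?_ _
            have := Real.add_one_le_exp q
            linarith
        _ = Real.exp (q * G.degree u) := by
            rw [← Real.exp_nat_mul]; ring_nf
        _ = Real.exp k := by rw [hqd]
    have hfinal : ((4:ℝ) ^ k)⁻¹ * Real.exp k ≤ Real.exp (-(k : ℝ) / 3) := by
      have h4k : (4:ℝ) ^ k = Real.exp (k * Real.log 4) := by
        rw [← Real.log_pow, Real.exp_log (by positivity)]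
      rw [h4k, ← Real.exp_neg, ← Real.exp_add]
      refine Real.exp_le_exp.2 ?_
      have hlog4 : Real.log 4 = 2 * Real.log 2 := by
        rw [show (4:ℝ) = 2 ^ 2 by norm_num, Real.log_pow]
        push_cast; ring
      have hl2 := Real.log_two_gt_d9
      have hk1 : (1:ℝ) ≤ (k:ℝ) := by exact_mod_cast hk
      rw [hlog4]
      nlinarith [hl2, hk1]
    calc ∑ j ∈ (range (G.degree u + 1)).filter
          (fun j => min (2 * k) (G.degree u) < j), bwt G k u j
        ≤ ((4:ℝ) ^ k)⁻¹ * ∑ j ∈ range (G.degree u + 1), (2:ℝ) ^ j * bwt G k u j := step1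
      _ ≤ ((4:ℝ) ^ k)⁻¹ * Real.exp k := by
          rw [hsum]
          exact mul_le_mul_of_nonneg_left hexp (by positivity)
      _ ≤ Real.exp (-(k : ℝ) / 3) := hfinal

/-- Chernoff lower tail : probability the binomial falls below `k/2` -/
lemma tailLo (k : ℕ) (hk : 2 ≤ k) (hke : Even k) (u : V) :
    ∑ j ∈ (range (G.degree u + 1)).filter (fun j => j < min (k / 2) (G.degree u)),
      bwt G k u j ≤ Real.exp (-(k : ℝ) / 8) := by
  classical
  by_cases hd : G.degree u ≤ k
  · -- here the binomial is deterministic (q = 1) or degree is 0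
    have hz : ∀ j ∈ (range (G.degree u + 1)).filter
        (fun j => j < min (k / 2) (G.degree u)), bwt G k u j = 0 := by
      intro j hj
      have hjlt : j < G.degree u := lt_of_lt_of_le (mem_filter.1 hj).2 (min_le_right _ _)
      have hdpos : 0 < G.degree u := Nat.lt_of_le_of_lt (Nat.zero_le j) hjlt
      have hq1 : expKOutProb G k u = 1 := by
        rw [expKOutProb, min_eq_left]
        rw [le_div_iff₀ (by exact_mod_cast hdpos), one_mul]
        exact_mod_cast hd
      rw [bwt, hq1]
      have : (1 - (1:ℝ)) = 0 := by ring
      rw [this, zero_pow (by omega), mul_zero, zero_mul]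
    rw [Finset.sum_congr rfl hz, Finset.sum_const_zero]
    positivity
  · push_neg at hd
    set q := expKOutProb G k u with hq
    have hq0 := q_nonneg G k u
    have hq1 := q_le_one G k u
    have hmin : min (k / 2) (G.degree u) = k / 2 := min_eq_left (by omega)
    obtain ⟨m, hm⟩ := hke
    have hm2 : k = 2 * m := by omega
    have hhalf : k / 2 = m := by omega
    have hterm : ∀ j ∈ (range (G.degree u + 1)).filter
          (fun j => j < min (k / 2) (G.degree u)),
        bwt G k u j ≤ (2:ℝ) ^ m * (((2:ℝ)⁻¹) ^ j * bwt G k u j) := by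
      intro j hj
      have hjm : j < m := by
        have := (mem_filter.1 hj).2
        rw [hmin, hhalf] at this
        exact this
      have hb := bwt_nonneg G k u j
      have h2 : (2:ℝ) ^ j ≤ (2:ℝ) ^ m := pow_le_pow_right₀ one_le_two hjm.le
      calc bwt G k u j = ((2:ℝ)⁻¹) ^ j * ((2:ℝ) ^ j * bwt G k u j) := by
            rw [← mul_assoc, inv_pow, inv_mul_cancel₀ (by positivity), one_mul]
        _ ≤ ((2:ℝ)⁻¹) ^ j * ((2:ℝ) ^ m * bwt G k u j) := by
            refine mul_le_mul_of_nonneg_left ?_ (by positivity)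
            exact mul_le_mul_of_nonneg_right h2 hb
        _ = (2:ℝ) ^ m * (((2:ℝ)⁻¹) ^ j * bwt G k u j) := by ring
    have step1 : ∑ j ∈ (range (G.degree u + 1)).filter
          (fun j => j < min (k / 2) (G.degree u)), bwt G k u j
        ≤ (2:ℝ) ^ m * ∑ j ∈ range (G.degree u + 1), ((2:ℝ)⁻¹) ^ j * bwt G k u j := by
      refine le_trans (Finset.sum_le_sum hterm) ?_
      rw [← Finset.mul_sum]
      refine mul_le_mul_of_nonneg_left ?_ (by positivity)
      refine Finset.sum_le_sum_of_subset_of_nonneg (filter_subset _ _) fun j _ _ => ?_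
      exact mul_nonneg (by positivity) (bwt_nonneg G k u j)
    have hsum : ∑ j ∈ range (G.degree u + 1), ((2:ℝ)⁻¹) ^ j * bwt G k u j
        = (1 - q / 2) ^ (G.degree u) := by
      rw [sum_twist G k u 2⁻¹ (by norm_num) (by nlinarith)]
      ring_nf
      rfl
    have hqd : q * (G.degree u : ℝ) = k := q_mul_deg G k u hd
    have hexp : (1 - q / 2) ^ (G.degree u) ≤ Real.exp (-(k:ℝ) / 2) := by
      calc (1 - q / 2) ^ (G.degree u) ≤ (Real.exp (-q / 2)) ^ (G.degree u) := by
            refine pow_le_pow_left₀ (by linarith) ?_ _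
            have := Real.add_one_le_exp (-q / 2)
            linarith
        _ = Real.exp (-q / 2 * G.degree u) := by
            rw [← Real.exp_nat_mul]; ring_nf
        _ = Real.exp (-(k:ℝ) / 2) := by
            congr 1
            field_simp
            linarith [hqd]
    have hfinal : (2:ℝ) ^ m * Real.exp (-(k:ℝ) / 2) ≤ Real.exp (-(k : ℝ) / 8) := by
      have h2m : (2:ℝ) ^ m = Real.exp (m * Real.log 2) := by
        rw [← Real.log_pow, Real.exp_log (by positivity)]
      rw [h2m, ← Real.exp_add]
      refine Real.exp_le_exp.2 ?_
      have hl2 := Real.log_two_lt_d9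
      have hl2' := Real.log_two_gt_d9
      have hmk : (k:ℝ) = 2 * m := by exact_mod_cast hm2
      have hm1 : (1:ℝ) ≤ (m:ℝ) := by
        have : 1 ≤ m := by omega
        exact_mod_cast this
      nlinarith
    calc ∑ j ∈ (range (G.degree u + 1)).filter
          (fun j => j < min (k / 2) (G.degree u)), bwt G k u j
        ≤ (2:ℝ) ^ m * ∑ j ∈ range (G.degree u + 1), ((2:ℝ)⁻¹) ^ j * bwt G k u j := step1
      _ ≤ (2:ℝ) ^ m * Real.exp (-(k:ℝ) / 2) := by
          rw [hsum]
          exact mul_le_mul_of_nonneg_left hexp (by positivity)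
      _ ≤ Real.exp (-(k : ℝ) / 8) := hfinal

noncomputable def AvgF (s : V → ℕ) : ℝ :=
  (∑ A ∈ PS G s, Fcnt G A) / ∏ u, ((G.degree u).choose (s u) : ℝ)

lemma avg_nonneg (s : V → ℕ) : 0 ≤ AvgF G s := by
  refine div_nonneg (Finset.sum_nonneg fun A _ => Fcnt_nonneg G A) ?_
  exact Finset.prod_nonneg fun u _ => Nat.cast_nonneg _

lemma avg_le (s : V → ℕ) (hs : ∀ u, s u ≤ G.degree u) :
    AvgF G s ≤ ((Fintype.card V).choose 2 : ℝ) := by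
  have hpos : (0:ℝ) < ∏ u, ((G.degree u).choose (s u) : ℝ) :=
    Finset.prod_pos fun u _ => by exact_mod_cast Nat.choose_pos (hs u)
  rw [AvgF, div_le_iff₀ hpos]
  have hcard : ((PS G s).card : ℝ) = ∏ u, ((G.degree u).choose (s u) : ℝ) := by
    rw [PS, Fintype.card_piFinset]
    push_cast
    refine Finset.prod_congr rfl fun u _ => ?_
    rw [card_powersetCard, SimpleGraph.card_neighborFinset_eq_degree]
  calc ∑ A ∈ PS G s, Fcnt G A
      ≤ ∑ _A ∈ PS G s, ((Fintype.card V).choose 2 : ℝ) :=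
        Finset.sum_le_sum fun A _ => Fcnt_le G A
    _ = ((PS G s).card : ℝ) * ((Fintype.card V).choose 2 : ℝ) := by
        rw [Finset.sum_const, nsmul_eq_mul]
    _ = ((Fintype.card V).choose 2 : ℝ) * ∏ u, ((G.degree u).choose (s u) : ℝ) := by
        rw [hcard]; ring

lemma avg_eq_term (s : V → ℕ) (hs : ∀ u, s u ≤ G.degree u) (t : ℕ) :
    Wt G t s * ∑ A ∈ PS G s, Fcnt G A
      = (Wt G t s * ∏ u, ((G.degree u).choose (s u) : ℝ)) * AvgF G s := by
  have hpos : (0:ℝ) < ∏ u, ((G.degree u).choose (s u) : ℝ) :=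
    Finset.prod_pos fun u _ => by exact_mod_cast Nat.choose_pos (hs u)
  rw [AvgF, mul_assoc, mul_div_cancel₀ _ (ne_of_gt hpos)]

lemma kOutExpect_eq_avg (t : ℕ) :
    kOutExpect G t = AvgF G (fun u => min t (G.degree u)) := by
  rw [kOutExpect_eq, AvgF]

lemma mem_SizeSpace_le {s : V → ℕ} (hs : s ∈ SizeSpace G) : ∀ u, s u ≤ G.degree u := by
  intro u
  rw [SizeSpace, Fintype.mem_piFinset] at hs
  have := hs u
  rw [mem_range] at this
  omega

/-- the upper estimate -/
lemma upper_est (k : ℕ) (hk : 2 ≤ k) (hke : Even k) :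
    expKOutExpect G k ≤ kOutExpect G (k / 2) +
      (Fintype.card V : ℝ) * Real.exp (-(k : ℝ) / 8) * ((Fintype.card V).choose 2 : ℝ) := by
  classical
  set M : ℝ := ((Fintype.card V).choose 2 : ℝ) with hM
  have hM0 : 0 ≤ M := Nat.cast_nonneg _
  set E : V → ℕ → Prop := fun u j => j < min (k / 2) (G.degree u) with hE
  set P : (V → ℕ) → ℝ := fun s => Wt G k s * ∏ u, ((G.degree u).choose (s u) : ℝ) with hP
  have hP0 : ∀ s ∈ SizeSpace G, 0 ≤ P s := fun s _ =>
    mul_nonneg (Wt_nonneg G k s) (Finset.prod_nonneg fun u _ => Nat.cast_nonneg _)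
  have hPbad : ∑ s ∈ (SizeSpace G).filter (fun s => ∃ u, E u (s u)), P s
      ≤ (Fintype.card V : ℝ) * Real.exp (-(k : ℝ) / 8) := by
    refine le_trans (union_bound G k E) ?_
    calc ∑ u, ∑ j ∈ (range (G.degree u + 1)).filter (E u), bwt G k u j
        ≤ ∑ _u : V, Real.exp (-(k : ℝ) / 8) :=
          Finset.sum_le_sum fun u _ => tailLo G k hk hke u
      _ = (Fintype.card V : ℝ) * Real.exp (-(k : ℝ) / 8) := by
          rw [Finset.sum_const, nsmul_eq_mul, Finset.card_univ]
  have hsplit : expKOutExpect G k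
      = ∑ s ∈ (SizeSpace G).filter (fun s => ¬ ∃ u, E u (s u)), P s * AvgF G s
        + ∑ s ∈ (SizeSpace G).filter (fun s => ∃ u, E u (s u)), P s * AvgF G s := by
    rw [expKOut_decomp]
    rw [← Finset.sum_filter_add_sum_filter_not (SizeSpace G) (fun s => ∃ u, E u (s u))]
    rw [add_comm]
    congr 1 <;>
    · refine Finset.sum_congr rfl fun s hs => ?_
      exact avg_eq_term G s (mem_SizeSpace_le G (Finset.mem_filter.1 hs).1) k
  have hmass : ∑ s ∈ (SizeSpace G).filter (fun s => ¬ ∃ u, E u (s u)), P s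
        + ∑ s ∈ (SizeSpace G).filter (fun s => ∃ u, E u (s u)), P s = 1 := by
    rw [add_comm, Finset.sum_filter_add_sum_filter_not]
    exact total_mass G k
  have hgood : ∀ s ∈ (SizeSpace G).filter (fun s => ¬ ∃ u, E u (s u)),
      AvgF G s ≤ AvgF G (fun u => min (k / 2) (G.degree u)) := by
    intro s hs
    rw [Finset.mem_filter] at hs
    push_neg at hs
    refine avg_anti G _ s (fun u => ?_) (mem_SizeSpace_le G hs.1)
    have := hs.2 u
    rw [hE] at this
    simp only [not_lt] at this
    exact this
  have hXnn : 0 ≤ AvgF G (fun u => min (k / 2) (G.degree u)) := avg_nonneg G _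
  calc expKOutExpect G k
      = ∑ s ∈ (SizeSpace G).filter (fun s => ¬ ∃ u, E u (s u)), P s * AvgF G s
        + ∑ s ∈ (SizeSpace G).filter (fun s => ∃ u, E u (s u)), P s * AvgF G s := hsplit
    _ ≤ (∑ s ∈ (SizeSpace G).filter (fun s => ¬ ∃ u, E u (s u)), P s)
          * AvgF G (fun u => min (k / 2) (G.degree u))
        + (∑ s ∈ (SizeSpace G).filter (fun s => ∃ u, E u (s u)), P s) * M := by
        refine add_le_add ?_ ?_
        · rw [Finset.sum_mul]
          refine Finset.sum_le_sum fun s hs => ?_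
          exact mul_le_mul_of_nonneg_left (hgood s hs)
            (hP0 s (Finset.mem_filter.1 hs).1)
        · rw [Finset.sum_mul]
          refine Finset.sum_le_sum fun s hs => ?_
          refine mul_le_mul_of_nonneg_left ?_ (hP0 s (Finset.mem_filter.1 hs).1)
          exact avg_le G s (mem_SizeSpace_le G (Finset.mem_filter.1 hs).1)
    _ ≤ 1 * AvgF G (fun u => min (k / 2) (G.degree u))
        + ((Fintype.card V : ℝ) * Real.exp (-(k : ℝ) / 8)) * M := by
        refine add_le_add ?_ ?_
        · refine mul_le_mul_of_nonneg_right ?_ hXnn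
          have h2 : 0 ≤ ∑ s ∈ (SizeSpace G).filter (fun s => ∃ u, E u (s u)), P s :=
            Finset.sum_nonneg fun s hs => hP0 s (Finset.mem_filter.1 hs).1
          linarith [hmass]
        · refine mul_le_mul_of_nonneg_right hPbad hM0
    _ = kOutExpect G (k / 2)
        + (Fintype.card V : ℝ) * Real.exp (-(k : ℝ) / 8) * M := by
        rw [one_mul, kOutExpect_eq_avg]

/-- the lower estimate -/
lemma lower_est (k : ℕ) (hk : 1 ≤ k) :
    kOutExpect G (2 * k) -
      (Fintype.card V : ℝ) * Real.exp (-(k : ℝ) / 3) * ((Fintype.card V).choose 2 : ℝ)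
    ≤ expKOutExpect G k := by
  classical
  set M : ℝ := ((Fintype.card V).choose 2 : ℝ) with hM
  have hM0 : 0 ≤ M := Nat.cast_nonneg _
  set E : V → ℕ → Prop := fun u j => min (2 * k) (G.degree u) < j with hE
  set P : (V → ℕ) → ℝ := fun s => Wt G k s * ∏ u, ((G.degree u).choose (s u) : ℝ) with hP
  have hP0 : ∀ s ∈ SizeSpace G, 0 ≤ P s := fun s _ =>
    mul_nonneg (Wt_nonneg G k s) (Finset.prod_nonneg fun u _ => Nat.cast_nonneg _)
  have hPbad : ∑ s ∈ (SizeSpace G).filter (fun s => ∃ u, E u (s u)), P s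
      ≤ (Fintype.card V : ℝ) * Real.exp (-(k : ℝ) / 3) := by
    refine le_trans (union_bound G k E) ?_
    calc ∑ u, ∑ j ∈ (range (G.degree u + 1)).filter (E u), bwt G k u j
        ≤ ∑ _u : V, Real.exp (-(k : ℝ) / 3) :=
          Finset.sum_le_sum fun u _ => tailHi G k hk u
      _ = (Fintype.card V : ℝ) * Real.exp (-(k : ℝ) / 3) := by
          rw [Finset.sum_const, nsmul_eq_mul, Finset.card_univ]
  have hPbad0 : 0 ≤ ∑ s ∈ (SizeSpace G).filter (fun s => ∃ u, E u (s u)), P s :=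
    Finset.sum_nonneg fun s hs => hP0 s (Finset.mem_filter.1 hs).1
  have hsplit : expKOutExpect G k
      = ∑ s ∈ (SizeSpace G).filter (fun s => ¬ ∃ u, E u (s u)), P s * AvgF G s
        + ∑ s ∈ (SizeSpace G).filter (fun s => ∃ u, E u (s u)), P s * AvgF G s := by
    rw [expKOut_decomp]
    rw [← Finset.sum_filter_add_sum_filter_not (SizeSpace G) (fun s => ∃ u, E u (s u))]
    rw [add_comm]
    congr 1 <;>
    · refine Finset.sum_congr rfl fun s hs => ?_
      exact avg_eq_term G s (mem_SizeSpace_le G (Finset.mem_filter.1 hs).1) k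
  have hmass : ∑ s ∈ (SizeSpace G).filter (fun s => ¬ ∃ u, E u (s u)), P s
        + ∑ s ∈ (SizeSpace G).filter (fun s => ∃ u, E u (s u)), P s = 1 := by
    rw [add_comm, Finset.sum_filter_add_sum_filter_not]
    exact total_mass G k
  set X : ℝ := AvgF G (fun u => min (2 * k) (G.degree u)) with hX
  have hXnn : 0 ≤ X := avg_nonneg G _
  have hXle : X ≤ M := avg_le G _ (fun u => min_le_right _ _)
  have hgood : ∀ s ∈ (SizeSpace G).filter (fun s => ¬ ∃ u, E u (s u)),
      X ≤ AvgF G s := by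
    intro s hs
    rw [Finset.mem_filter] at hs
    push_neg at hs
    refine avg_anti G s _ (fun u => ?_) (fun u => min_le_right _ _)
    have := hs.2 u
    rw [hE] at this
    simp only [not_lt] at this
    exact this
  have key : (∑ s ∈ (SizeSpace G).filter (fun s => ¬ ∃ u, E u (s u)), P s) * X
      ≤ expKOutExpect G k := by
    rw [hsplit, Finset.sum_mul]
    have hA : ∑ s ∈ (SizeSpace G).filter (fun s => ¬ ∃ u, E u (s u)), P s * X
        ≤ ∑ s ∈ (SizeSpace G).filter (fun s => ¬ ∃ u, E u (s u)), P s * AvgF G s := by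
      refine Finset.sum_le_sum fun s hs => ?_
      exact mul_le_mul_of_nonneg_left (hgood s hs) (hP0 s (Finset.mem_filter.1 hs).1)
    have hB : 0 ≤ ∑ s ∈ (SizeSpace G).filter (fun s => ∃ u, E u (s u)), P s * AvgF G s := by
      refine Finset.sum_nonneg fun s hs => ?_
      exact mul_nonneg (hP0 s (Finset.mem_filter.1 hs).1) (avg_nonneg G s)
    linarith
  have h1 : X - (∑ s ∈ (SizeSpace G).filter (fun s => ∃ u, E u (s u)), P s) * M
      ≤ (∑ s ∈ (SizeSpace G).filter (fun s => ¬ ∃ u, E u (s u)), P s) * X := by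
    have hgm : ∑ s ∈ (SizeSpace G).filter (fun s => ¬ ∃ u, E u (s u)), P s
        = 1 - ∑ s ∈ (SizeSpace G).filter (fun s => ∃ u, E u (s u)), P s := by
      linarith [hmass]
    rw [hgm]
    have hb := hPbad
    nlinarith [hXle, hXnn, hPbad0]
  have h2 : kOutExpect G (2 * k)
      - (Fintype.card V : ℝ) * Real.exp (-(k : ℝ) / 3) * M
      ≤ X - (∑ s ∈ (SizeSpace G).filter (fun s => ∃ u, E u (s u)), P s) * M := by
    rw [kOutExpect_eq_avg, ← hX]
    have := mul_le_mul_of_nonneg_right hPbad hM0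
    linarith
  linarith [h2.trans (h1.trans key)]
end Aux

/-- For an `n`-vertex graph `G` and an even integer `k ≥ 2`, with
`p = n·(e^{-k/3} + e^{-k/8}) < 1` and `D = (p/(1-p))·C(n,2)`, the expected number
of inter-component edges in the expected `k`-out model is sandwiched, up to `D`,
between those of the exact `2k`-out and exact `k/2`-out models. -/
theorem expKOut_sandwiched_between_kOut
    (n k : ℕ) (V : Type) [Fintype V] [DecidableEq V]
    (G : SimpleGraph V) [DecidableRel G.Adj]
    (hn : 2 ≤ n) (hcard : Fintype.card V = n) (hk : 2 ≤ k) (hke : Even k)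
    (p D : ℝ)
    (hp : p = n * (Real.exp (-(k : ℝ) / 3) + Real.exp (-(k : ℝ) / 8)))
    (hp1 : p < 1)
    (hD : D = p / (1 - p) * (n.choose 2 : ℝ)) :
    kOutExpect G (2 * k) - D ≤ expKOutExpect G k ∧
      expKOutExpect G k ≤ kOutExpect G (k / 2) + D := by
  have hup := upper_est G k hk hke
  have hlo := lower_est G k (by omega)
  rw [hcard] at hup hlo
  have hn0 : (0:ℝ) ≤ (n:ℝ) := Nat.cast_nonneg _
  have hC0 : (0:ℝ) ≤ (n.choose 2 : ℝ) := Nat.cast_nonneg _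
  have he3 : 0 < Real.exp (-(k : ℝ) / 3) := Real.exp_pos _
  have he8 : 0 < Real.exp (-(k : ℝ) / 8) := Real.exp_pos _
  have hp0 : 0 ≤ p := by
    rw [hp]; positivity
  have h1p : 0 < 1 - p := by linarith
  have hpD : p ≤ p / (1 - p) := by
    rw [le_div_iff₀ h1p]
    nlinarith
  have h8p : (n:ℝ) * Real.exp (-(k : ℝ) / 8) ≤ p := by
    rw [hp]; nlinarith
  have h3p : (n:ℝ) * Real.exp (-(k : ℝ) / 3) ≤ p := by
    rw [hp]; nlinarith
  have h8D : (n:ℝ) * Real.exp (-(k : ℝ) / 8) * (n.choose 2 : ℝ) ≤ D := by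
    rw [hD]
    refine mul_le_mul_of_nonneg_right (h8p.trans hpD) hC0
  have h3D : (n:ℝ) * Real.exp (-(k : ℝ) / 3) * (n.choose 2 : ℝ) ≤ D := by
    rw [hD]
    refine mul_le_mul_of_nonneg_right (h3p.trans hpD) hC0
  constructor
  · linarith
  · linarith
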